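/- Let G be a finite Blaschke product such that the iterates of G tend uniformly to the unit circle on compact subsets of 𝔻: for every compact C ⊆ 𝔻, min_{z ∈ C} |Gⁿ(z)| → 1 as n → ∞. Let K, L ⊆ 𝔻 be compact. Then for all sufficiently large n: the set G⁻ⁿ(K) := { z ∈ 𝔻 : Gⁿ(z) ∈ K } is disjoint from L, and L is contained in the connected component of closure(𝔻) \ G⁻ⁿ(K) that contains the unit circle. -/

import Mathlib

open Metric Set

private lemma blaschke_normSq (a z : ℂ) :
    Complex.normSq (1 - (starRingEnd ℂ) a * z) - Complex.normSq (z - a) =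
      (1 - Complex.normSq a) * (1 - Complex.normSq z) := by
  simp only [Complex.normSq_apply, Complex.sub_re, Complex.sub_im, Complex.mul_re,
    Complex.mul_im, Complex.one_re, Complex.one_im, Complex.conj_re, Complex.conj_im]
  ring

private lemma den_ne (a z : ℂ) (ha : ‖a‖ < 1) (hz : ‖z‖ ≤ 1) :
    1 - (starRingEnd ℂ) a * z ≠ 0 := by
  intro h
  have h1 : (starRingEnd ℂ) a * z = 1 := by linear_combination -h
  have h2 : ‖(starRingEnd ℂ) a * z‖ < 1 := by
    rw [norm_mul, Complex.norm_conj]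
    calc ‖a‖ * ‖z‖ ≤ ‖a‖ * 1 :=
          mul_le_mul_of_nonneg_left hz (norm_nonneg _)
      _ < 1 := by simpa using ha
  rw [h1] at h2; simp at h2

private lemma factor_lt (a z : ℂ) (ha : ‖a‖ < 1) (hz : ‖z‖ < 1) :
    ‖(z - a) / (1 - (starRingEnd ℂ) a * z)‖ < 1 := by
  rw [norm_div, div_lt_one (by
    have := den_ne a z ha hz.le
    exact (norm_pos_iff.mpr this))]
  have hid := blaschke_normSq a z
  have h1 : Complex.normSq a < 1 := by
    have := Complex.sq_norm a; nlinarith [norm_nonneg a]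
  have h2 : Complex.normSq z < 1 := by
    have := Complex.sq_norm z; nlinarith [norm_nonneg z]
  nlinarith [Complex.sq_norm (z - a), Complex.sq_norm (1 - (starRingEnd ℂ) a * z),
    norm_nonneg (z - a), norm_nonneg (1 - (starRingEnd ℂ) a * z)]

private lemma factor_le (a z : ℂ) (ha : ‖a‖ < 1) (hz : ‖z‖ ≤ 1) :
    ‖(z - a) / (1 - (starRingEnd ℂ) a * z)‖ ≤ 1 := by
  rw [norm_div, div_le_one (norm_pos_iff.mpr (den_ne a z ha hz))]
  have hid := blaschke_normSq a z
  have h1 : Complex.normSq a < 1 := by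
    have := Complex.sq_norm a; nlinarith [norm_nonneg a]
  have h2 : Complex.normSq z ≤ 1 := by
    have := Complex.sq_norm z; nlinarith [norm_nonneg z]
  nlinarith [Complex.sq_norm (z - a), Complex.sq_norm (1 - (starRingEnd ℂ) a * z),
    norm_nonneg (z - a), norm_nonneg (1 - (starRingEnd ℂ) a * z)]

private lemma factor_eq (a z : ℂ) (ha : ‖a‖ < 1) (hz : ‖z‖ = 1) :
    ‖(z - a) / (1 - (starRingEnd ℂ) a * z)‖ = 1 := by
  rw [norm_div, div_eq_one_iff_eq (by
    exact (norm_ne_zero_iff.mpr (den_ne a z ha hz.le)))]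
  have hid := blaschke_normSq a z
  have h2 : Complex.normSq z = 1 := by
    have := Complex.sq_norm z; nlinarith
  have : Complex.normSq (z - a) = Complex.normSq (1 - (starRingEnd ℂ) a * z) := by
    rw [h2] at hid; nlinarith
  rw [Complex.norm_def, Complex.norm_def, this]

private lemma exists_radius (C : Set ℂ) (hC : IsCompact C) (hCD : C ⊆ ball (0:ℂ) 1) :
    ∃ ρ : ℝ, 0 ≤ ρ ∧ ρ < 1 ∧ ∀ z ∈ C, ‖z‖ ≤ ρ := by
  rcases C.eq_empty_or_nonempty with h | h
  · exact ⟨0, le_rfl, one_pos, by simp [h]⟩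
  · obtain ⟨w, hwC, hw⟩ := hC.exists_isMaxOn h continuous_norm.continuousOn
    refine ⟨‖w‖, norm_nonneg _, ?_, hw⟩
    have := hCD hwC
    simpa [Complex.dist_eq] using this

private lemma annulus_preconnected (ρ : ℝ) (h0 : 0 ≤ ρ) :
    IsPreconnected {z : ℂ | ρ ≤ ‖z‖ ∧ ‖z‖ ≤ 1} := by
  have himg : {z : ℂ | ρ ≤ ‖z‖ ∧ ‖z‖ ≤ 1} =
      (fun p : ℝ × ℝ => (p.1 : ℂ) * Complex.exp (p.2 * Complex.I)) ''
        (Set.Icc ρ 1 ×ˢ Set.univ) := by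
    ext z
    constructor
    · rintro ⟨h1, h2⟩
      exact ⟨(‖z‖, Complex.arg z), ⟨⟨h1, h2⟩, trivial⟩,
        Complex.norm_mul_exp_arg_mul_I z⟩
    · rintro ⟨⟨t, θ⟩, ⟨⟨ht1, ht2⟩, -⟩, rfl⟩
      have habs : ‖(t : ℂ) * Complex.exp (θ * Complex.I)‖ = t := by
        rw [norm_mul, Complex.norm_exp_ofReal_mul_I, mul_one, Complex.norm_real, Real.norm_eq_abs,
          abs_of_nonneg (h0.trans ht1)]
      exact ⟨by rw [habs]; exact ht1, by rw [habs]; exact ht2⟩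
  rw [himg]
  exact ((isPreconnected_Icc.prod isPreconnected_univ)).image _
    (by fun_prop)

/-- `G` agrees on the closed unit disk with a finite Blaschke product
`λ · ∏ᵢ (z - aᵢ)/(1 - conj(aᵢ) z)` with `d ≥ 1`, `|λ| = 1`, `|aᵢ| < 1`. -/
def IsFiniteBlaschke (G : ℂ → ℂ) : Prop :=
  ∃ (d : ℕ) (lam : ℂ) (a : Fin d → ℂ),
    1 ≤ d ∧ ‖lam‖ = 1 ∧ (∀ i, ‖a i‖ < 1) ∧
    ∀ z ∈ Metric.closedBall (0:ℂ) 1,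
      G z = lam * ∏ i, (z - a i) / (1 - (starRingEnd ℂ) (a i) * z)

/-- if the iterates of a finite Blaschke product `G` tend uniformly to
the unit circle on compact subsets of `𝔻`, then for any compacts `K, L ⊆ 𝔻` and all
`n` large enough, `G⁻ⁿ(K)` is disjoint from `L` and `L` lies in the connected component
of `closure 𝔻 \ G⁻ⁿ(K)` containing the unit circle (the component of the point `1`). -/
theorem stmt_10 (G : ℂ → ℂ) (hG : IsFiniteBlaschke G)
    (hesc : ∀ C : Set ℂ, C ⊆ Metric.ball (0:ℂ) 1 → IsCompact C →
      ∀ ε > (0:ℝ), ∃ N : ℕ, ∀ n ≥ N, ∀ z ∈ C, 1 - ε < ‖G^[n] z‖)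
    (K L : Set ℂ) (hK : IsCompact K) (hKD : K ⊆ Metric.ball (0:ℂ) 1)
    (hL : IsCompact L) (hLD : L ⊆ Metric.ball (0:ℂ) 1) :
    ∃ N : ℕ, ∀ n ≥ N,
      Disjoint {z ∈ Metric.ball (0:ℂ) 1 | G^[n] z ∈ K} L ∧
      L ⊆ connectedComponentIn
        (Metric.closedBall (0:ℂ) 1 \ {z ∈ Metric.ball (0:ℂ) 1 | G^[n] z ∈ K}) 1 := by
  obtain ⟨d, lam, a, hd, hlam, ha, hGeq⟩ := hG
  set B : ℂ → ℂ := fun z => lam * ∏ i, (z - a i) / (1 - (starRingEnd ℂ) (a i) * z) with hBdef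
  have habs_ball : ∀ z : ℂ, z ∈ ball (0:ℂ) 1 ↔ ‖z‖ < 1 := by
    intro z; simp [Complex.dist_eq]
  have habs_cb : ∀ z : ℂ, z ∈ closedBall (0:ℂ) 1 ↔ ‖z‖ ≤ 1 := by
    intro z; simp [Complex.dist_eq]
  have hBabs : ∀ z : ℂ, ‖B z‖ =
      ∏ i, ‖(z - a i) / (1 - (starRingEnd ℂ) (a i) * z)‖ := by
    intro z; rw [hBdef]; simp [norm_mul, hlam, norm_prod]
  -- basic facts about B
  have hBlt : ∀ z : ℂ, ‖z‖ < 1 → ‖B z‖ < 1 := by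
    intro z hz
    rw [hBabs]
    have i0 : Fin d := ⟨0, hd⟩
    rw [← Finset.mul_prod_erase Finset.univ _ (Finset.mem_univ i0)]
    calc ‖(z - a i0) / (1 - (starRingEnd ℂ) (a i0) * z)‖ *
          ∏ i ∈ Finset.univ.erase i0, ‖(z - a i) / (1 - (starRingEnd ℂ) (a i) * z)‖
        ≤ ‖(z - a i0) / (1 - (starRingEnd ℂ) (a i0) * z)‖ * 1 := by
          apply mul_le_mul_of_nonneg_left _ (norm_nonneg _)
          exact Finset.prod_le_one (fun i _ => norm_nonneg _)
            (fun i _ => factor_le (a i) z (ha i) hz.le)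
      _ < 1 := by simpa using factor_lt (a i0) z (ha i0) hz
  have hBle : ∀ z : ℂ, ‖z‖ ≤ 1 → ‖B z‖ ≤ 1 := by
    intro z hz
    rw [hBabs]
    exact Finset.prod_le_one (fun i _ => norm_nonneg _)
      (fun i _ => factor_le (a i) z (ha i) hz)
  have hBeq1 : ∀ z : ℂ, ‖z‖ = 1 → ‖B z‖ = 1 := by
    intro z hz
    rw [hBabs]
    exact Finset.prod_eq_one (fun i _ => factor_eq (a i) z (ha i) hz)
  have hBdiff : ∀ z : ℂ, ‖z‖ ≤ 1 → DifferentiableAt ℂ B z := by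
    intro z hz
    apply DifferentiableAt.const_mul
    apply DifferentiableAt.fun_finsetProd
    intro i _
    exact DifferentiableAt.div (differentiableAt_id.sub_const _)
      ((differentiableAt_const _).sub ((differentiableAt_const _).mul differentiableAt_id))
      (den_ne (a i) z (ha i) hz)
  -- iterates of B
  have hBndiff : ∀ n : ℕ, ∀ z : ℂ, ‖z‖ ≤ 1 →
      (DifferentiableAt ℂ (B^[n]) z ∧ ‖B^[n] z‖ ≤ 1) := by
    intro n
    induction n with
    | zero => intro z hz; simpa using hz
    | succ n ih =>
      intro z hz
      rw [Function.iterate_succ_apply', Function.iterate_succ']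
      obtain ⟨ihd, ihm⟩ := ih z hz
      exact ⟨(hBdiff _ ihm).comp z ihd, hBle _ ihm⟩
  have hBnlt : ∀ n : ℕ, ∀ z : ℂ, ‖z‖ < 1 → ‖B^[n] z‖ < 1 := by
    intro n
    induction n with
    | zero => intro z hz; simpa using hz
    | succ n ih =>
      intro z hz
      rw [Function.iterate_succ_apply']
      exact hBlt _ (ih z hz)
  have hBneq1 : ∀ n : ℕ, ∀ z : ℂ, ‖z‖ = 1 → ‖B^[n] z‖ = 1 := by
    intro n
    induction n with
    | zero => intro z hz; simpa using hz
    | succ n ih =>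
      intro z hz
      rw [Function.iterate_succ_apply']
      exact hBeq1 _ (ih z hz)
  have hGB : ∀ z ∈ closedBall (0:ℂ) 1, G z = B z := hGeq
  have hiter : ∀ n : ℕ, ∀ z : ℂ, ‖z‖ < 1 → G^[n] z = B^[n] z := by
    intro n
    induction n with
    | zero => intro z _; simp
    | succ n ih =>
      intro z hz
      rw [Function.iterate_succ_apply', Function.iterate_succ_apply', ih z hz]
      exact hGB _ ((habs_cb _).mpr (hBnlt n z hz).le)
  -- radii for K and L
  obtain ⟨s, hs0, hs1, hsK⟩ := exists_radius K hK hKD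
  obtain ⟨r, hr0, hr1, hrL⟩ := exists_radius L hL hLD
  obtain ⟨N, hN⟩ := hesc (closedBall 0 r) (closedBall_subset_ball hr1)
    (isCompact_closedBall _ _) (1 - s) (by linarith)
  refine ⟨N, fun n hn => ?_⟩
  set S : Set ℂ := {z ∈ ball (0:ℂ) 1 | G^[n] z ∈ K} with hSdef
  have hbig : ∀ z : ℂ, ‖z‖ ≤ r → s < ‖G^[n] z‖ := by
    intro z hz
    have := hN n hn z (by simpa [Complex.dist_eq] using hz)
    linarith
  have hSball : S ⊆ ball (0:ℂ) 1 := fun z hz => hz.1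
  have hdisj : Disjoint S L := by
    rw [Set.disjoint_left]
    rintro z ⟨hz1, hz2⟩ hzL
    have h1 := hbig z (hrL z hzL)
    have h2 := hsK _ hz2
    linarith
  refine ⟨hdisj, ?_⟩
  -- S is compact
  have hSeq : S = closedBall (0:ℂ) 1 ∩ (B^[n]) ⁻¹' K := by
    ext z
    constructor
    · rintro ⟨hz, hzK⟩
      have hz' := (habs_ball z).mp hz
      exact ⟨(habs_cb z).mpr hz'.le, by rw [Set.mem_preimage, ← hiter n z hz']; exact hzK⟩
    · rintro ⟨hz, hzK⟩
      rw [Set.mem_preimage] at hzK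
      have hz1 : ‖z‖ < 1 := by
        rcases lt_or_eq_of_le ((habs_cb z).mp hz) with h | h
        · exact h
        · exfalso
          have h1 := hBneq1 n z h
          have h2 := hsK _ hzK
          linarith
      exact ⟨(habs_ball z).mpr hz1, by rw [hiter n z hz1]; exact hzK⟩
  have hScl : IsClosed S := by
    rw [hSeq]
    apply ContinuousOn.preimage_isClosed_of_isClosed ?_ isClosed_closedBall hK.isClosed
    intro z hz
    exact ((hBndiff n z ((habs_cb z).mp hz)).1).continuousAt.continuousWithinAt
  have hScompact : IsCompact S := by
    apply (isCompact_closedBall (0:ℂ) 1).of_isClosed_subset hScl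
    exact hSball.trans ball_subset_closedBall
  -- radius for S, annulus
  obtain ⟨ρ0, hρ00, hρ01, hρ0S⟩ := exists_radius S hScompact hSball
  set ρ : ℝ := (ρ0 + 1) / 2 with hρdef
  have hρ0' : ρ0 < ρ := by rw [hρdef]; linarith
  have hρ1 : ρ < 1 := by rw [hρdef]; linarith
  have hρnn : 0 ≤ ρ := by rw [hρdef]; linarith
  set A : Set ℂ := {z : ℂ | ρ ≤ ‖z‖ ∧ ‖z‖ ≤ 1} with hAdef
  set F : Set ℂ := closedBall (0:ℂ) 1 \ S with hFdef
  set W : Set ℂ := connectedComponentIn F 1 with hWdef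
  have hAF : A ⊆ F := by
    rintro z ⟨hz1, hz2⟩
    refine ⟨(habs_cb z).mpr hz2, fun hzS => ?_⟩
    have := hρ0S z hzS
    linarith
  have h1A : (1:ℂ) ∈ A := by
    constructor <;> simp [hρ1.le]
  have hAW : A ⊆ W := (annulus_preconnected ρ hρnn).subset_connectedComponentIn h1A hAF
  -- main containment
  intro z0 hz0L
  by_contra hz0W
  have hz0ball : ‖z0‖ < 1 := (habs_ball z0).mp (hLD hz0L)
  have hz0S : z0 ∉ S := Set.disjoint_right.mp hdisj hz0L
  set Ω : Set ℂ := ball (0:ℂ) 1 \ S with hΩdef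
  have hΩopen : IsOpen Ω := isOpen_ball.sdiff hScl
  have hz0Ω : z0 ∈ Ω := ⟨(habs_ball z0).mpr hz0ball, hz0S⟩
  set V : Set ℂ := connectedComponentIn Ω z0 with hVdef
  have hVopen : IsOpen V := hΩopen.connectedComponentIn
  have hz0V : z0 ∈ V := mem_connectedComponentIn hz0Ω
  have hVΩ : V ⊆ Ω := connectedComponentIn_subset _ _
  have hVF : V ⊆ F := fun z hz => ⟨ball_subset_closedBall (hVΩ hz).1, (hVΩ hz).2⟩
  have hVW : Disjoint V W := by
    rw [Set.disjoint_left]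
    intro p hpV hpW
    apply hz0W
    have : V ⊆ W := by
      rw [hWdef, connectedComponentIn_eq hpW]
      exact (isPreconnected_connectedComponentIn).subset_connectedComponentIn hpV hVF
    rw [hWdef]
    exact this hz0V
  have hVρ : V ⊆ ball (0:ℂ) ρ := by
    intro z hz
    rw [mem_ball, Complex.dist_eq, sub_zero]
    by_contra h
    push_neg at h
    have hzA : z ∈ A := ⟨h, ((habs_ball z).mp (hVΩ hz).1).le⟩
    exact Set.disjoint_left.mp hVW hz (hAW hzA)
  have hVcl : closure V ⊆ closedBall (0:ℂ) ρ :=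
    closure_minimal (hVρ.trans ball_subset_closedBall) isClosed_closedBall
  have hVcl1 : ∀ z ∈ closure V, ‖z‖ < 1 := by
    intro z hz
    have := mem_closedBall_zero_iff.mp (hVcl hz)
    calc ‖z‖ = ‖z‖ := rfl
      _ ≤ ρ := this
      _ < 1 := hρ1
  -- frontier of V is in S
  have hfront : frontier V ⊆ S := by
    intro p hp
    by_contra hpS
    have hpcl : p ∈ closure V := frontier_subset_closure hp
    have hpΩ : p ∈ Ω := ⟨(habs_ball p).mpr (hVcl1 p hpcl), hpS⟩
    have hUopen : IsOpen (connectedComponentIn Ω p) := hΩopen.connectedComponentIn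
    have hpU : p ∈ connectedComponentIn Ω p := mem_connectedComponentIn hpΩ
    obtain ⟨q, hqU, hqV⟩ := mem_closure_iff.mp hpcl _ hUopen hpU
    have hUV : connectedComponentIn Ω p = V := by
      rw [connectedComponentIn_eq hqU, hVdef, connectedComponentIn_eq hqV]
    have hpV : p ∈ V := hUV ▸ hpU
    rw [hVopen.frontier_eq] at hp
    exact hp.2 hpV
  -- maximum principle
  have hVbdd : Bornology.IsBounded V := (isBounded_ball).subset hVρ
  have hdcc : DiffContOnCl ℂ (B^[n]) V := by
    constructor
    · intro z hz
      exact ((hBndiff n z (hVcl1 z (subset_closure hz)).le).1).differentiableWithinAt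
    · intro z hz
      exact ((hBndiff n z (hVcl1 z hz).le).1).continuousAt.continuousWithinAt
  have hbound : ∀ z ∈ frontier V, ‖B^[n] z‖ ≤ s := by
    intro z hz
    have hzS := hfront hz
    have hz1 : ‖z‖ < 1 := (habs_ball z).mp hzS.1
    have : B^[n] z = G^[n] z := (hiter n z hz1).symm
    rw [this]
    exact hsK _ hzS.2
  have hfinal := Complex.norm_le_of_forall_mem_frontier_norm_le hVbdd hdcc hbound
    (subset_closure hz0V)
  have h1 : s < ‖G^[n] z0‖ := hbig z0 (hrL z0 hz0L)
  rw [hiter n z0 hz0ball] at h1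
  have : ‖B^[n] z0‖ = ‖B^[n] z0‖ := rfl
  linarith [this ▸ h1]
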